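/- arXiv:2009.03527 — 3 statements merged into one kernel-verified Lean document; each statement's English description precedes it below -/
import Mathlib

section
/- Let $\mathbf{x} \sim \mathcal{N}(0, I_{m})$ be a standard Gaussian vector in $\mathbb{R}^{m}$ and let $\mathbf{e}_1$ be the first standard basis vector. Then for any $0 < \delta < 1$, the probability that $|\mathbf{e}_1^T \mathbf{x}| \leq \frac{\delta}{\sqrt{m e}} \|\mathbf{x}\|_2$ is at most $\delta$. -/
open MeasureTheory ProbabilityTheory Real

lemma gauss_density (g : ℝ → ℝ) :
    ∫ x, g x ∂(gaussianReal 0 1) = ∫ x, gaussianPDFReal 0 1 x * g x := by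
  rw [gaussianReal_of_var_ne_zero 0 one_ne_zero]
  have h : (gaussianPDF 0 1) = fun x => ((gaussianPDFReal 0 1 x).toNNReal : ENNReal) := rfl
  rw [h, integral_withDensity_eq_integral_smul
    ((measurable_gaussianPDFReal 0 1).real_toNNReal) g]
  congr 1
  ext x
  simp [NNReal.smul_def, Real.coe_toNNReal _ (gaussianPDFReal_nonneg 0 1 x)]

lemma gauss_pdf_mul (a : ℝ) (x : ℝ) :
    gaussianPDFReal 0 1 x * Real.exp (a * x ^ 2)
      = (Real.sqrt (2 * π))⁻¹ * Real.exp (-(1/2 - a) * x ^ 2) := by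
  simp only [gaussianPDFReal]
  rw [mul_assoc, ← Real.exp_add]
  push_cast
  ring_nf

lemma gauss_integrable (a : ℝ) (ha : a < 1/2) :
    Integrable (fun x => Real.exp (a * x ^ 2)) (gaussianReal 0 1) := by
  rw [gaussianReal_of_var_ne_zero 0 one_ne_zero]
  have h : (gaussianPDF 0 1) = fun x => ((gaussianPDFReal 0 1 x).toNNReal : ENNReal) := rfl
  rw [h, integrable_withDensity_iff_integrable_coe_smul
    ((measurable_gaussianPDFReal 0 1).real_toNNReal)]
  have h2 : (fun x => ((gaussianPDFReal 0 1 x).toNNReal : ℝ) • Real.exp (a * x ^ 2))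
      = fun x => (Real.sqrt (2 * π))⁻¹ * Real.exp (-(1/2 - a) * x ^ 2) := by
    ext x
    rw [smul_eq_mul, Real.coe_toNNReal _ (gaussianPDFReal_nonneg 0 1 x), gauss_pdf_mul]
  rw [h2]
  exact (integrable_exp_neg_mul_sq (by linarith)).const_mul _

lemma gauss_mgf (a : ℝ) (ha : a < 1/2) :
    ∫ x, Real.exp (a * x ^ 2) ∂(gaussianReal 0 1) = (Real.sqrt (1 - 2 * a))⁻¹ := by
  rw [gauss_density]
  simp_rw [gauss_pdf_mul]
  rw [integral_const_mul, integral_gaussian]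
  have h1 : π / (1/2 - a) = 2 * π / (1 - 2 * a) := by
    rw [div_eq_div_iff (by linarith) (by linarith)]; ring
  rw [h1, Real.sqrt_div (by positivity) _]
  have h2 : Real.sqrt (2 * π) ≠ 0 := by positivity
  field_simp

lemma pi_gauss_integral (m : ℕ) (f : Fin m → ℝ → ℝ) :
    ∫ x : Fin m → ℝ, ∏ i, f i (x i) ∂(Measure.pi fun _ => gaussianReal 0 1)
      = ∏ i, ∫ t, f i t ∂(gaussianReal 0 1) := by
  letI : MeasureSpace ℝ := ⟨gaussianReal 0 1⟩
  haveI : SigmaFinite (volume : Measure ℝ) := inferInstanceAs (SigmaFinite (gaussianReal 0 1))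
  exact integral_fintype_prod_eq_prod f

lemma pi_gauss_integrable (m : ℕ) (f : Fin m → ℝ → ℝ)
    (hf : ∀ i, Integrable (f i) (gaussianReal 0 1)) :
    Integrable (fun x : Fin m → ℝ => ∏ i, f i (x i)) (Measure.pi fun _ => gaussianReal 0 1) := by
  letI : MeasureSpace ℝ := ⟨gaussianReal 0 1⟩
  haveI : SigmaFinite (volume : Measure ℝ) := inferInstanceAs (SigmaFinite (gaussianReal 0 1))
  exact Integrable.fintype_prod_dep hf

/-- For a standard Gaussian vector `x` in `ℝ^m` (`m ≥ 1`) and `0 < δ < 1`,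
the probability that `|e₁ᵀ x| ≤ (δ / √(m e)) ‖x‖₂` is at most `δ`. -/
theorem stmt0 (m : ℕ) (hm : 0 < m) (δ : ℝ) (hδ0 : 0 < δ) (hδ1 : δ < 1) :
    (Measure.pi fun _ : Fin m => gaussianReal 0 1)
      {x | |x ⟨0, hm⟩| ≤ δ / Real.sqrt (m * Real.exp 1) * Real.sqrt (∑ i, x i ^ 2)}
      ≤ ENNReal.ofReal δ := by
  set μ := Measure.pi fun _ : Fin m => gaussianReal 0 1 with hμ
  set i₀ : Fin m := ⟨0, hm⟩ with hi₀
  have hm1 : (1:ℝ) ≤ m := by exact_mod_cast hm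
  have hmpos : (0:ℝ) < m := by linarith
  set a : Fin m → ℝ := fun i => 1/(2*m) - (if i = i₀ then Real.exp 1/(2*δ^2) else 0) with ha
  have hδsq : (0:ℝ) < δ ^ 2 := by positivity
  have ha_lt : ∀ i, a i < 1/2 := by
    intro i
    simp only [ha]
    by_cases h : i = i₀
    · have h1 : 1/(2*(m:ℝ)) ≤ 1/2 := by
        apply div_le_div_of_nonneg_left (by norm_num) (by norm_num) (by linarith)
      simp only [h, eq_self_iff_true, if_true]
      have : 0 < Real.exp 1/(2*δ^2) := by positivity
      linarith
    · simp only [if_neg h, sub_zero]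
      have hm2 : 2 ≤ m := by
        by_contra hc
        push_neg at hc
        interval_cases m
        · exact h (Fin.ext (by omega))
      have h2 : (2:ℝ) ≤ m := by exact_mod_cast hm2
      have h3 : (2:ℝ) < 2 * m := by linarith
      apply div_lt_div_of_pos_left one_pos (by norm_num) h3
  set f : (Fin m → ℝ) → ℝ := fun x => ∏ i, Real.exp (a i * (x i) ^ 2) with hf
  have hf_exp : ∀ x, f x = Real.exp (∑ i, a i * (x i) ^ 2) := by
    intro x
    simp only [hf]
    exact (Real.exp_sum Finset.univ fun i => a i * x i ^ 2).symm
  have hsub : {x : Fin m → ℝ | |x i₀| ≤ δ / Real.sqrt (m * Real.exp 1) * Real.sqrt (∑ i, x i ^ 2)}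
      ⊆ {x | 1 ≤ f x} := by
    intro x hx
    simp only [Set.mem_setOf_eq] at hx ⊢
    rw [hf_exp]
    have hS : (0:ℝ) ≤ ∑ i, x i ^ 2 := Finset.sum_nonneg fun i _ => sq_nonneg _
    have hme : (0:ℝ) < m * Real.exp 1 := by positivity
    have hc : (δ / Real.sqrt (m * Real.exp 1)) ^ 2 = δ^2 / (m * Real.exp 1) := by
      rw [div_pow, Real.sq_sqrt hme.le]
    have hx2 : (x i₀)^2 ≤ δ^2 / (m * Real.exp 1) * (∑ i, x i ^ 2) := by
      have h0 : |x i₀| ^ 2 ≤ (δ / Real.sqrt (m * Real.exp 1) * Real.sqrt (∑ i, x i ^ 2)) ^ 2 :=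
        pow_le_pow_left₀ (abs_nonneg _) hx 2
      rw [sq_abs] at h0
      calc (x i₀)^2 ≤ (δ / Real.sqrt (m * Real.exp 1) * Real.sqrt (∑ i, x i ^ 2)) ^ 2 := h0
        _ = (δ / Real.sqrt (m * Real.exp 1))^2 * (Real.sqrt (∑ i, x i ^ 2))^2 := by ring
        _ = δ^2 / (m * Real.exp 1) * (∑ i, x i ^ 2) := by rw [hc, Real.sq_sqrt hS]
    have hsum : ∑ i, a i * (x i) ^ 2
        = 1/(2*m) * (∑ i, x i ^ 2) - Real.exp 1/(2*δ^2) * (x i₀)^2 := by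
      simp only [ha, sub_mul, ite_mul, zero_mul]
      rw [Finset.sum_sub_distrib, Finset.mul_sum]
      congr 1
      rw [Finset.sum_ite_eq' Finset.univ i₀ (fun i => Real.exp 1/(2*δ^2) * (x i)^2)]
      simp
    rw [hsum]
    have hkey : Real.exp 1/(2*δ^2) * (x i₀)^2 ≤ 1/(2*m) * (∑ i, x i ^ 2) := by
      have h1 : Real.exp 1/(2*δ^2) * (x i₀)^2
          ≤ Real.exp 1/(2*δ^2) * (δ^2 / (m * Real.exp 1) * (∑ i, x i ^ 2)) :=
        mul_le_mul_of_nonneg_left hx2 (by positivity)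
      have h2 : Real.exp 1/(2*δ^2) * (δ^2 / (m * Real.exp 1) * (∑ i, x i ^ 2))
          = 1/(2*m) * (∑ i, x i ^ 2) := by
        have he : Real.exp 1 ≠ 0 := (Real.exp_pos 1).ne'
        field_simp
      linarith
    have hpos : (0:ℝ) ≤ 1/(2*m) * (∑ i, x i ^ 2) - Real.exp 1/(2*δ^2) * (x i₀)^2 := by linarith
    calc (1:ℝ) = Real.exp 0 := (Real.exp_zero).symm
      _ ≤ _ := Real.exp_le_exp.mpr hpos
  have hint : Integrable f μ :=
    pi_gauss_integrable m _ fun i => gauss_integrable (a i) (ha_lt i)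
  have hf_nonneg : ∀ x, 0 ≤ f x := fun x => Finset.prod_nonneg fun i _ => (Real.exp_pos _).le
  have hval : ∫ x, f x ∂μ = ∏ i, (Real.sqrt (1 - 2 * a i))⁻¹ := by
    rw [hμ, hf]
    exact (pi_gauss_integral m (fun i t => Real.exp (a i * t ^ 2))).trans
      (Finset.prod_congr rfl fun i _ => gauss_mgf (a i) (ha_lt i))
  have hesqrt : (0:ℝ) < Real.sqrt (Real.exp 1) := Real.sqrt_pos.mpr (Real.exp_pos 1)
  have hbound : ∫ x, f x ∂μ ≤ δ := by
    rw [hval]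
    have hsplit : ∏ i, (Real.sqrt (1 - 2 * a i))⁻¹
        = (Real.sqrt (1 - 2 * a i₀))⁻¹ * ((Real.sqrt (1 - 1/m))⁻¹) ^ (m - 1) := by
      rw [← Finset.mul_prod_erase Finset.univ _ (Finset.mem_univ i₀)]
      congr 1
      rw [Finset.prod_congr rfl (fun i hi => ?_), Finset.prod_const,
        Finset.card_erase_of_mem (Finset.mem_univ i₀), Finset.card_univ, Fintype.card_fin]
      have hne : i ≠ i₀ := (Finset.mem_erase.mp hi).1
      have hai : a i = 1/(2*m) := by simp [ha, hne]
      rw [hai]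
      congr 2
      field_simp
    rw [hsplit]
    have ht0 : (0:ℝ) ≤ 1 - 1/m := by
      have : 1/(m:ℝ) ≤ 1 := by rw [div_le_one hmpos]; exact hm1
      linarith
    have haval : 1 - 2 * a i₀ = 1 - 1/m + Real.exp 1/δ^2 := by
      simp only [ha, if_pos rfl, eq_self_iff_true, if_true]
      field_simp
      ring
    have hA : (Real.sqrt (1 - 2 * a i₀))⁻¹ ≤ δ / Real.sqrt (Real.exp 1) := by
      rw [haval]
      have h0 : Real.sqrt (Real.exp 1/δ^2) = Real.sqrt (Real.exp 1)/δ := by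
        rw [Real.sqrt_div (Real.exp_pos 1).le, Real.sqrt_sq hδ0.le]
      have h1 : Real.sqrt (Real.exp 1)/δ ≤ Real.sqrt (1 - 1/m + Real.exp 1/δ^2) := by
        rw [← h0]
        exact Real.sqrt_le_sqrt (by linarith)
      have h2 : (0:ℝ) < Real.sqrt (Real.exp 1)/δ := by positivity
      calc (Real.sqrt (1 - 1/m + Real.exp 1/δ^2))⁻¹
          ≤ (Real.sqrt (Real.exp 1)/δ)⁻¹ := inv_anti₀ h2 h1
        _ = δ / Real.sqrt (Real.exp 1) := inv_div _ _
    have hB : ((Real.sqrt (1 - 1/m))⁻¹) ^ (m - 1) ≤ Real.sqrt (Real.exp 1) := by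
      rcases eq_or_lt_of_le (Nat.succ_le_of_lt hm) with hm1' | hm2
      · have : m = 1 := hm1'.symm
        subst this
        simp only [Nat.sub_self, pow_zero]
        have h1 : (1:ℝ) ≤ Real.exp 1 := by linarith [Real.add_one_le_exp (1:ℝ)]
        calc (1:ℝ) = Real.sqrt 1 := by simp
          _ ≤ Real.sqrt (Real.exp 1) := Real.sqrt_le_sqrt h1
      · have hm2' : 2 ≤ m := hm2
        have hmr : (2:ℝ) ≤ m := by exact_mod_cast hm2'
        have hm1ne : (0:ℝ) < (m:ℝ) - 1 := by linarith
        set y : ℝ := 1/((m:ℝ) - 1) with hy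
        have hypos : 0 < y := by positivity
        have hkey : Real.exp (-y) ≤ 1 - 1/m := by
          have h1 : y + 1 ≤ Real.exp y := Real.add_one_le_exp y
          have h2 : Real.exp (-y) = (Real.exp y)⁻¹ := Real.exp_neg y
          have h3 : (Real.exp y)⁻¹ ≤ (y + 1)⁻¹ := inv_anti₀ (by linarith) h1
          have h4 : (y + 1)⁻¹ = 1 - 1/m := by
            rw [hy]
            rw [show 1/((m:ℝ)-1) + 1 = m/((m:ℝ)-1) by field_simp; ring]
            rw [inv_div]
            field_simp
          linarith [h2 ▸ h3, h4 ▸ h3]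
        have hsq : Real.exp (-y/2) ≤ Real.sqrt (1 - 1/m) := by
          rw [Real.exp_half (-y)]
          exact Real.sqrt_le_sqrt hkey
        have hinv : (Real.sqrt (1 - 1/m))⁻¹ ≤ Real.exp (y/2) := by
          have he : Real.exp (y/2) = (Real.exp (-y/2))⁻¹ := by
            rw [← Real.exp_neg]; ring_nf
          rw [he]
          exact inv_anti₀ (Real.exp_pos _) hsq
        calc ((Real.sqrt (1 - 1/m))⁻¹) ^ (m - 1)
            ≤ (Real.exp (y/2)) ^ (m - 1) :=
              pow_le_pow_left₀ (by positivity) hinv _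
          _ = Real.exp ((m - 1 : ℕ) * (y/2)) := (Real.exp_nat_mul _ _).symm
          _ = Real.exp (1/2) := by
              congr 1
              rw [Nat.cast_sub hm, Nat.cast_one, hy]
              field_simp
          _ = Real.sqrt (Real.exp 1) := by
              rw [Real.exp_half]
    calc (Real.sqrt (1 - 2 * a i₀))⁻¹ * ((Real.sqrt (1 - 1/m))⁻¹) ^ (m - 1)
        ≤ (δ / Real.sqrt (Real.exp 1)) * Real.sqrt (Real.exp 1) :=
          mul_le_mul hA hB (by positivity) (by positivity)
      _ = δ := div_mul_cancel₀ δ hesqrt.ne'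
  calc μ {x | |x i₀| ≤ δ / Real.sqrt (m * Real.exp 1) * Real.sqrt (∑ i, x i ^ 2)}
      ≤ μ {x | 1 ≤ f x} := measure_mono hsub
    _ = ENNReal.ofReal ((μ {x | 1 ≤ f x}).toReal) :=
        (ENNReal.ofReal_toReal (measure_ne_top μ _)).symm
    _ ≤ ENNReal.ofReal (∫ x, f x ∂μ) := by
        apply ENNReal.ofReal_le_ofReal
        have := mul_meas_ge_le_integral_of_nonneg (ae_of_all μ hf_nonneg) hint 1
        simpa [measureReal_def] using this
    _ ≤ ENNReal.ofReal δ := ENNReal.ofReal_le_ofReal hbound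
end

section
/- Let $x_1, \ldots, x_m$ be i.i.d. standard normal random variables and let $0 < c < 1$ with $m c^2 < 1$. Then $\Pr[(c^2 - 1)x_1^2 + c^2 \sum_{i=2}^m x_i^2 \geq 0] \leq \sqrt{m e}\, c$, where $e$ is Euler's number. -/
open MeasureTheory ProbabilityTheory Real
open scoped ENNReal NNReal

lemma gauss_mgf_aux (s : ℝ) (hs : s < 1/2) :
    Integrable (fun x => rexp (s * x^2)) (gaussianReal 0 1) ∧
    ∫ x, rexp (s * x^2) ∂(gaussianReal 0 1) = (Real.sqrt (1 - 2*s))⁻¹ := by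
  have hb : 0 < 1/2 - s := by linarith
  have hd : gaussianReal 0 1
      = volume.withDensity fun x => ((gaussianPDFReal 0 1 x).toNNReal : ℝ≥0∞) := by
    rw [gaussianReal_of_var_ne_zero _ one_ne_zero]; rfl
  have hmeas : Measurable fun x => (gaussianPDFReal 0 1 x).toNNReal :=
    (measurable_gaussianPDFReal 0 1).real_toNNReal
  have key : ∀ x : ℝ, ((gaussianPDFReal 0 1 x).toNNReal : ℝ) • rexp (s * x ^ 2)
      = (Real.sqrt (2*π))⁻¹ * rexp (-(1/2 - s) * x^2) := by
    intro x
    rw [smul_eq_mul, Real.coe_toNNReal _ (gaussianPDFReal_nonneg _ _ _)]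
    unfold gaussianPDFReal
    rw [mul_assoc, ← Real.exp_add]
    norm_num
    ring_nf
    tauto
  have hint : Integrable (fun x => (Real.sqrt (2*π))⁻¹ * rexp (-(1/2 - s) * x^2)) volume :=
    (integrable_exp_neg_mul_sq hb).const_mul _
  constructor
  · rw [hd, integrable_withDensity_iff_integrable_smul hmeas]
    simpa only [NNReal.smul_def, key] using hint
  · rw [hd, integral_withDensity_eq_integral_smul hmeas]
    simp_rw [NNReal.smul_def, key]
    rw [integral_const_mul, integral_gaussian]
    rw [show (1:ℝ) - 2*s = 2*(1/2 - s) by ring]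
    rw [Real.sqrt_mul (by norm_num : (0:ℝ) ≤ 2), Real.sqrt_mul (by norm_num : (0:ℝ) ≤ 2),
      Real.sqrt_div pi_nonneg]
    have h1 : Real.sqrt π ≠ 0 := ne_of_gt (Real.sqrt_pos.mpr pi_pos)
    have h2 : Real.sqrt 2 ≠ 0 := by positivity
    have h3 : Real.sqrt (1/2 - s) ≠ 0 := ne_of_gt (Real.sqrt_pos.mpr hb)
    have h4 : Real.sqrt (1 - s*2) ≠ 0 := ne_of_gt (Real.sqrt_pos.mpr (by linarith))
    rw [mul_inv, div_eq_mul_inv]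
    rw [show (Real.sqrt 2)⁻¹ * (Real.sqrt π)⁻¹ * (Real.sqrt π * (Real.sqrt (1/2 - s))⁻¹)
        = (Real.sqrt π * (Real.sqrt π)⁻¹) * ((Real.sqrt 2)⁻¹ * (Real.sqrt (1/2 - s))⁻¹) by ring,
      mul_inv_cancel₀ h1, one_mul, mul_inv]


lemma pi_gauss {m : ℕ} (f : Fin m → ℝ → ℝ) (hf : ∀ i, Integrable (f i) (gaussianReal 0 1)) :
    Integrable (fun x : Fin m → ℝ => ∏ i, f i (x i)) (Measure.pi fun _ => gaussianReal 0 1) ∧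
    ∫ x : Fin m → ℝ, ∏ i, f i (x i) ∂(Measure.pi fun _ => gaussianReal 0 1)
      = ∏ i, ∫ x, f i x ∂(gaussianReal 0 1) := by
  letI : MeasureSpace ℝ := ⟨gaussianReal 0 1⟩
  haveI : SigmaFinite (volume : Measure ℝ) :=
    inferInstanceAs (SigmaFinite (gaussianReal 0 1))
  exact ⟨Integrable.fintype_prod_dep hf, integral_fintype_prod_eq_prod f⟩

/-- For i.i.d. standard normals `x₁,…,x_m`, `0 < c < 1` with `m c² < 1`,
`Pr[(c²-1)x₁² + c² ∑_{i=2}^m x_i² ≥ 0] ≤ √(m e) c`. -/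
theorem stmt2 (m : ℕ) (hm : 0 < m) (c : ℝ) (hc0 : 0 < c) (hc1 : c < 1)
    (hmc : (m : ℝ) * c ^ 2 < 1) :
    (Measure.pi fun _ : Fin m => gaussianReal 0 1)
      {x | 0 ≤ (c ^ 2 - 1) * x ⟨0, hm⟩ ^ 2 +
            c ^ 2 * ∑ i ∈ Finset.univ \ {(⟨0, hm⟩ : Fin m)}, x i ^ 2}
      ≤ ENNReal.ofReal (Real.sqrt (m * Real.exp 1) * c) := by
  have hc2 : (0:ℝ) < c^2 := by positivity
  have hc2' : (0:ℝ) < 1 - c^2 := by nlinarith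
  have hmpos : (0:ℝ) < m := by exact_mod_cast hm
  set i0 : Fin m := ⟨0, hm⟩ with hi0def
  set L : ℝ := (1 - m*c^2) / (2*m*c^2*(1-c^2)) with hLdef
  have hL : 0 < L := div_pos (by linarith) (by positivity)
  set a : Fin m → ℝ := fun i => if i = i0 then c^2 - 1 else c^2 with hadef
  have hm2 : ∀ i : Fin m, i ≠ i0 → (2:ℝ) ≤ m := by
    intro i hi
    have h1 : i.val ≠ 0 := fun h => hi (Fin.ext h)
    have h2 := i.isLt
    have : 2 ≤ m := by omega
    exact_mod_cast this
  have hs : ∀ i, L * a i < 1/2 := by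
    intro i
    by_cases h : i = i0
    · simp only [hadef, h, if_pos rfl]
      nlinarith [mul_pos hL hc2']
    · simp only [hadef, if_neg h]
      have h2 : (2:ℝ) ≤ m := hm2 i h
      rw [hLdef, div_mul_eq_mul_div, div_lt_iff₀ (by positivity)]
      nlinarith [mul_pos (show (0:ℝ) < (m:ℝ) - 1 by linarith) hc2]
  have hI := fun i => gauss_mgf_aux (L * a i) (hs i)
  set f : Fin m → ℝ → ℝ := fun i t => rexp (L * a i * t^2) with hfdef
  have hPi := pi_gauss f (fun i => (hI i).1)
  set μpi := Measure.pi fun _ : Fin m => gaussianReal 0 1 with hμdef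
  set F : (Fin m → ℝ) → ℝ := fun x => ∏ i, f i (x i) with hFdef
  have herase : (Finset.univ \ {i0} : Finset (Fin m)) = Finset.univ.erase i0 := by
    rw [← Finset.erase_eq]
  -- set inclusion
  have hsub : {x : Fin m → ℝ | 0 ≤ (c ^ 2 - 1) * x i0 ^ 2 +
        c ^ 2 * ∑ i ∈ Finset.univ \ {i0}, x i ^ 2} ⊆ {x | (1:ℝ) ≤ F x} := by
    intro x hx
    simp only [Set.mem_setOf_eq] at hx ⊢
    have hY : (c ^ 2 - 1) * x i0 ^ 2 + c ^ 2 * ∑ i ∈ Finset.univ \ {i0}, x i ^ 2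
        = ∑ i, a i * x i ^ 2 := by
      rw [herase, ← Finset.add_sum_erase _ _ (Finset.mem_univ i0)]
      simp only [hadef, if_pos rfl]
      congr 1
      rw [Finset.mul_sum]
      refine Finset.sum_congr rfl fun i hi => ?_
      rw [if_neg (Finset.ne_of_mem_erase hi)]
    have h1 : F x = rexp (L * (∑ i, a i * x i ^ 2)) := by
      simp only [hFdef, hfdef, ← Real.exp_sum]
      congr 1
      rw [Finset.mul_sum]
      exact Finset.sum_congr rfl fun i _ => by ring
    rw [h1]
    exact Real.one_le_exp (mul_nonneg hL.le (hY ▸ hx))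
  -- Markov
  have hnn : ∀ x, 0 ≤ F x := fun x => Finset.prod_nonneg fun i _ => (Real.exp_pos _).le
  have hmark := mul_meas_ge_le_integral_of_nonneg (μ := μpi) (ae_of_all _ hnn) hPi.1 1
  rw [one_mul] at hmark
  have hfin : μpi {x | (1:ℝ) ≤ F x} ≠ ⊤ := measure_ne_top _ _
  -- product of integrals
  have hprod : ∫ x, F x ∂μpi = ∏ i, (Real.sqrt (1 - 2*(L * a i)))⁻¹ := by
    rw [hPi.2]; exact Finset.prod_congr rfl fun i _ => (hI i).2
  have key0 : 1 - 2*(L * a i0) = ((m:ℝ)*c^2)⁻¹ := by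
    simp only [hadef, if_pos rfl, hLdef]
    have hd1 : (m:ℝ) ≠ 0 := ne_of_gt hmpos
    have hd2 : c^2 ≠ 0 := ne_of_gt hc2
    have hd3 : (1:ℝ) - c^2 ≠ 0 := ne_of_gt hc2'
    field_simp
    ring
  have hhead : (Real.sqrt (1 - 2*(L * a i0)))⁻¹ = Real.sqrt m * c := by
    rw [key0, Real.sqrt_inv, inv_inv, Real.sqrt_mul (le_of_lt hmpos), Real.sqrt_sq hc0.le]
  have htail : ∏ i ∈ Finset.univ.erase i0, (Real.sqrt (1 - 2*(L * a i)))⁻¹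
      ≤ Real.sqrt (Real.exp 1) := by
    have he1 : (1:ℝ) ≤ Real.sqrt (Real.exp 1) :=
      (Real.le_sqrt zero_le_one (Real.exp_nonneg 1)).mpr
        (by simpa using Real.one_le_exp (zero_le_one (α := ℝ)))
    by_cases hm1 : m = 1
    · have hempty : (Finset.univ.erase i0 : Finset (Fin m)) = ∅ := by
        ext i
        simp only [Finset.mem_erase, Finset.mem_univ, and_true, Finset.notMem_empty,
          iff_false, not_and, Decidable.not_not, ne_eq, not_not]
        have h2 := i.isLt
        have h3 : i.val = 0 := by omega
        exact Fin.ext h3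
      rw [hempty, Finset.prod_empty]
      exact he1
    · have hm2' : (2:ℝ) ≤ m := by
        have : 2 ≤ m := by omega
        exact_mod_cast this
      set t : ℝ := ((m:ℝ)-1)/((m:ℝ)*(1-c^2)) with htdef
      have ht0 : 0 < t := div_pos (by linarith) (by positivity)
      have keyt : ∀ i ∈ Finset.univ.erase i0,
          (Real.sqrt (1 - 2*(L * a i)))⁻¹ = (Real.sqrt t)⁻¹ := by
        intro i hi
        have heq : 1 - 2*(L * a i) = t := by
          simp only [hadef, if_neg (Finset.ne_of_mem_erase hi), hLdef, htdef]
          have hd1 : (m:ℝ) ≠ 0 := ne_of_gt hmpos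
          have hd3 : (1:ℝ) - c^2 ≠ 0 := ne_of_gt hc2'
          have hd2 : c^2 ≠ 0 := ne_of_gt hc2
          field_simp
          ring
        rw [heq]
      rw [Finset.prod_congr rfl keyt, Finset.prod_const,
        Finset.card_erase_of_mem (Finset.mem_univ i0), Finset.card_univ, Fintype.card_fin]
      set n := m - 1 with hndef
      have hncast : ((n:ℕ):ℝ) = (m:ℝ) - 1 := by
        rw [hndef, Nat.cast_sub hm, Nat.cast_one]
      have hmm1 : (0:ℝ) < (m:ℝ) - 1 := by linarith
      have hu0 : (0:ℝ) < ((m:ℝ)-1)/m := div_pos hmm1 hmpos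
      have hut : ((m:ℝ)-1)/m ≤ t := by
        rw [htdef, div_le_div_iff₀ (by positivity) (by positivity)]
        nlinarith [mul_nonneg (mul_nonneg hmm1.le hmpos.le) hc2.le]
      have hinv : (((m:ℝ)-1)/m)⁻¹ ≤ Real.exp ((1:ℝ)/((m:ℝ)-1)) := by
        rw [inv_div]
        have h5 := Real.add_one_le_exp ((1:ℝ)/((m:ℝ)-1))
        have heq : (m:ℝ)/((m:ℝ)-1) = 1/((m:ℝ)-1) + 1 := by field_simp; ring
        rw [heq]; exact h5
      have hpow : ((((m:ℝ)-1)/m)⁻¹)^n ≤ Real.exp 1 := by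
        calc ((((m:ℝ)-1)/m)⁻¹)^n ≤ (Real.exp ((1:ℝ)/((m:ℝ)-1)))^n :=
              pow_le_pow_left₀ (inv_nonneg.mpr hu0.le) hinv n
          _ = Real.exp (n * ((1:ℝ)/((m:ℝ)-1))) := (Real.exp_nat_mul _ n).symm
          _ = Real.exp 1 := by
              congr 1
              rw [hncast]
              field_simp
      have htn : (Real.exp 1)⁻¹ ≤ t^n := by
        have h2 : ((((m:ℝ)-1)/m)^n)⁻¹ ≤ Real.exp 1 := by rw [← inv_pow]; exact hpow
        have h3 := inv_anti₀ (by positivity) h2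
        rw [inv_inv] at h3
        exact h3.trans (pow_le_pow_left₀ hu0.le hut n)
      -- final: ((√t)⁻¹)^n ≤ √(exp 1)
      rw [Real.le_sqrt (by positivity) (Real.exp_nonneg 1)]
      calc (((Real.sqrt t)⁻¹)^n)^2 = ((Real.sqrt t ^ 2)⁻¹)^n := by ring
        _ = (t⁻¹)^n := by rw [Real.sq_sqrt ht0.le]
        _ = (t^n)⁻¹ := by rw [inv_pow]
        _ ≤ Real.exp 1 := by
            have h3 := inv_anti₀ (by positivity) htn
            rwa [inv_inv] at h3
  -- assemble
  have hbound : ∫ x, F x ∂μpi ≤ Real.sqrt ((m:ℝ) * Real.exp 1) * c := by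
    rw [hprod, ← Finset.mul_prod_erase _ _ (Finset.mem_univ i0), hhead]
    calc Real.sqrt m * c * ∏ i ∈ Finset.univ.erase i0, (Real.sqrt (1 - 2*(L * a i)))⁻¹
        ≤ Real.sqrt m * c * Real.sqrt (Real.exp 1) :=
          mul_le_mul_of_nonneg_left htail (by positivity)
      _ = Real.sqrt ((m:ℝ) * Real.exp 1) * c := by
          rw [Real.sqrt_mul (Nat.cast_nonneg m)]; ring
  calc μpi {x | 0 ≤ (c ^ 2 - 1) * x i0 ^ 2 +
        c ^ 2 * ∑ i ∈ Finset.univ \ {i0}, x i ^ 2}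
      ≤ μpi {x | (1:ℝ) ≤ F x} := measure_mono hsub
    _ = ENNReal.ofReal (μpi {x | (1:ℝ) ≤ F x}).toReal := (ENNReal.ofReal_toReal hfin).symm
    _ ≤ ENNReal.ofReal (∫ x, F x ∂μpi) := ENNReal.ofReal_le_ofReal hmark
    _ ≤ ENNReal.ofReal (Real.sqrt (m * Real.exp 1) * c) := ENNReal.ofReal_le_ofReal hbound
end

section
/- Let $D_X \in \mathbb{R}^{m_x \times d}$, $D_Y \in \mathbb{R}^{m_y \times d}$ with QR decompositions $D_X = Q_X R_X$, $D_Y = Q_Y R_Y$, and let $R_X R_Y^T = U \Sigma V^T$ be an SVD. For a threshold $\gamma \geq 0$, define $\widetilde{\Sigma} = \max(\Sigma - \gamma I, 0)$, $B_X = Q_X U \sqrt{\widetilde{\Sigma}}$, $B_Y = Q_Y V \sqrt{\widetilde{\Sigma}}$. Then $\|D_X D_Y^T - B_X B_Y^T\| = \|\Sigma - \widetilde{\Sigma}\| \leq \gamma$ and $\|B_X B_Y^T\|_* = \mathrm{tr}(\widetilde{\Sigma})$, while $\|D_X D_Y^T\|_* = \mathrm{tr}(\Sigma)$. -/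
open Matrix

/-- The spectral (ℓ₂ operator) norm of a real matrix. -/
noncomputable def specNorm {m n : ℕ} (A : Matrix (Fin m) (Fin n) ℝ) : ℝ :=
  ‖LinearMap.toContinuousLinearMap (Matrix.toEuclideanLin A)‖

/-- The singular values of a real matrix, in non-increasing order. -/
noncomputable def singularValues {m n : ℕ} (A : Matrix (Fin m) (Fin n) ℝ) : Fin n → ℝ :=
  let f : Fin n → ℝ := fun i =>
    Real.sqrt ((show (Aᵀ * A).IsHermitian by
      simpa [Matrix.conjTranspose_eq_transpose_of_trivial] using
        Matrix.isHermitian_conjTranspose_mul_self A).eigenvalues i)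
  fun i => (f ∘ Tuple.sort f) i.rev

/-- The nuclear norm: the sum of the singular values. -/
noncomputable def nuclearNorm {m n : ℕ} (A : Matrix (Fin m) (Fin n) ℝ) : ℝ :=
  ∑ i, singularValues A i

open scoped Matrix.Norms.L2Operator MatrixOrder

lemma ct_eq_t {m n : ℕ} (A : Matrix (Fin m) (Fin n) ℝ) : Aᴴ = Aᵀ := by
  ext i j; simp [Matrix.conjTranspose_apply]

lemma specNorm_eq_l2norm {m n : ℕ} (A : Matrix (Fin m) (Fin n) ℝ) : specNorm A = ‖A‖ := rfl

lemma norm_one_le' (n : ℕ) : ‖(1 : Matrix (Fin n) (Fin n) ℝ)‖ ≤ 1 := by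
  rw [Matrix.l2_opNorm_def]
  refine ContinuousLinearMap.opNorm_le_bound _ zero_le_one fun x => ?_
  rw [one_mul]
  apply le_of_eq
  congr 1
  ext i
  simp [Matrix.toEuclideanLin_apply, Matrix.one_mulVec]

lemma norm_le_one_of_orth {m n : ℕ} (A : Matrix (Fin m) (Fin n) ℝ) (h : Aᵀ * A = 1) :
    ‖A‖ ≤ 1 := by
  have h1 : ‖Aᴴ * A‖ = ‖A‖ * ‖A‖ := Matrix.l2_opNorm_conjTranspose_mul_self A
  rw [ct_eq_t, h] at h1
  nlinarith [norm_nonneg A, norm_one_le' n]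

lemma norm_transpose' {m n : ℕ} (A : Matrix (Fin m) (Fin n) ℝ) : ‖Aᵀ‖ = ‖A‖ := by
  rw [← ct_eq_t]; exact Matrix.l2_opNorm_conjTranspose A

lemma norm_conj_eq {mx my d : ℕ} (A : Matrix (Fin mx) (Fin d) ℝ) (B : Matrix (Fin my) (Fin d) ℝ)
    (hA : Aᵀ * A = 1) (hB : Bᵀ * B = 1) (M : Matrix (Fin d) (Fin d) ℝ) :
    ‖A * M * Bᵀ‖ = ‖M‖ := by
  have hA1 : ‖A‖ ≤ 1 := norm_le_one_of_orth A hA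
  have hB1 : ‖B‖ ≤ 1 := norm_le_one_of_orth B hB
  have hAt : ‖Aᵀ‖ ≤ 1 := by rw [norm_transpose']; exact hA1
  have hBt : ‖Bᵀ‖ ≤ 1 := by rw [norm_transpose']; exact hB1
  apply le_antisymm
  · have n1 := Matrix.l2_opNorm_mul (A * M) Bᵀ
    have n2 := Matrix.l2_opNorm_mul A M
    nlinarith [norm_nonneg (A * M), norm_nonneg M, norm_nonneg Bᵀ, norm_nonneg (A * M * Bᵀ),
      norm_nonneg A]
  · have hrec : M = Aᵀ * (A * M * Bᵀ) * B := by
      calc M = (Aᵀ * A) * M * (Bᵀ * B) := by rw [hA, hB, one_mul, mul_one]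
        _ = Aᵀ * (A * M * Bᵀ) * B := by simp only [Matrix.mul_assoc]
    have n1 := Matrix.l2_opNorm_mul (Aᵀ * (A * M * Bᵀ)) B
    have n2 := Matrix.l2_opNorm_mul Aᵀ (A * M * Bᵀ)
    nlinarith [norm_nonneg (Aᵀ * (A * M * Bᵀ)), norm_nonneg (A * M * Bᵀ), norm_nonneg M,
      norm_nonneg B, norm_nonneg Aᵀ, congrArg (‖·‖) hrec]

lemma norm_diagonal_le {d : ℕ} (c : Fin d → ℝ) (γ : ℝ) (hγ : 0 ≤ γ) (h : ∀ i, |c i| ≤ γ) :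
    ‖(Matrix.diagonal c : Matrix (Fin d) (Fin d) ℝ)‖ ≤ γ := by
  rw [Matrix.l2_opNorm_def]
  refine ContinuousLinearMap.opNorm_le_bound _ hγ fun x => ?_
  have happ : ∀ i, (LinearMap.toContinuousLinearMap
      (Matrix.toEuclideanLin (Matrix.diagonal c)) x) i = c i * x i := by
    intro i
    simp [Matrix.toEuclideanLin_apply, Matrix.mulVec_diagonal]
  rw [EuclideanSpace.norm_eq, EuclideanSpace.norm_eq]
  have key : Real.sqrt (∑ i, ‖(LinearMap.toContinuousLinearMap
      (Matrix.toEuclideanLin (Matrix.diagonal c)) x) i‖ ^ 2)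
      ≤ Real.sqrt (∑ i, γ ^ 2 * ‖x i‖ ^ 2) := by
    apply Real.sqrt_le_sqrt
    apply Finset.sum_le_sum
    intro i _
    rw [happ i, Real.norm_eq_abs, sq_abs, Real.norm_eq_abs, sq_abs]
    have h2 : (c i) ^ 2 ≤ γ ^ 2 := by nlinarith [abs_nonneg (c i), sq_abs (c i), h i]
    nlinarith [sq_nonneg (x i)]
  refine key.trans (le_of_eq ?_)
  rw [← Finset.mul_sum, Real.sqrt_mul (sq_nonneg γ), Real.sqrt_sq hγ]

lemma sum_sort_rev {n : ℕ} (f : Fin n → ℝ) :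
    ∑ i : Fin n, (f ∘ Tuple.sort f) i.rev = ∑ i, f i := by
  have h1 : ∑ i : Fin n, (f ∘ Tuple.sort f) i.rev = ∑ i, (f ∘ Tuple.sort f) i :=
    Fintype.sum_bijective Fin.rev Fin.rev_bijective _ _ (fun i => rfl)
  rw [h1]
  exact Equiv.sum_comp (Tuple.sort f) f

lemma nuclearNorm_eq_sum_sqrt {m n : ℕ} (A : Matrix (Fin m) (Fin n) ℝ) :
    nuclearNorm A = ∑ i, Real.sqrt ((Matrix.isHermitian_conjTranspose_mul_self A).eigenvalues i) := by
  unfold nuclearNorm singularValues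
  exact sum_sort_rev _

lemma trace_sqrt {k : ℕ} {M : Matrix (Fin k) (Fin k) ℝ} (hM : M.PosSemidef) :
    (CFC.sqrt M).trace = ∑ i, Real.sqrt (hM.1.eigenvalues i) := by
  rw [CFC.sqrt_eq_cfc, cfc_nnreal_eq_real _ M, hM.1.cfc_eq]
  simp [IsHermitian.cfc, Matrix.trace_mul_cycle, Matrix.trace_diagonal]
  exact Finset.sum_congr rfl fun i _ => by rw [max_eq_left (hM.eigenvalues_nonneg i)]

lemma nuclearNorm_conj {mx my d : ℕ} (A : Matrix (Fin mx) (Fin d) ℝ)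
    (B : Matrix (Fin my) (Fin d) ℝ) (hA : Aᵀ * A = 1) (hB : Bᵀ * B = 1)
    (c : Fin d → ℝ) (hc : ∀ i, 0 ≤ c i) :
    nuclearNorm (A * Matrix.diagonal c * Bᵀ) = ∑ i, c i := by
  set X := A * Matrix.diagonal c * Bᵀ with hX
  have sqrt_sq : ∀ i, Real.sqrt (c i) * Real.sqrt (c i) = c i := fun i =>
    Real.mul_self_sqrt (hc i)
  have hXtX : Xᴴ * X = B * Matrix.diagonal (fun i => c i * c i) * Bᵀ := by
    rw [ct_eq_t, hX]
    calc (A * Matrix.diagonal c * Bᵀ)ᵀ * (A * Matrix.diagonal c * Bᵀ)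
        = B * Matrix.diagonal c * (Aᵀ * A) * Matrix.diagonal c * Bᵀ := by
          simp [Matrix.transpose_mul, Matrix.diagonal_transpose, Matrix.mul_assoc]
      _ = B * (Matrix.diagonal c * Matrix.diagonal c) * Bᵀ := by
          rw [hA, Matrix.mul_one]
          simp [Matrix.mul_assoc]
      _ = B * Matrix.diagonal (fun i => c i * c i) * Bᵀ := by
          rw [Matrix.diagonal_mul_diagonal]
  have dd : Matrix.diagonal (fun i => Real.sqrt (c i)) *
      Matrix.diagonal (fun i => Real.sqrt (c i)) = Matrix.diagonal c := by
    rw [Matrix.diagonal_mul_diagonal]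
    exact congrArg _ (funext sqrt_sq)
  have hN : (B * Matrix.diagonal c * Bᵀ).PosSemidef := by
    have h0 := Matrix.posSemidef_conjTranspose_mul_self
      (Matrix.diagonal (fun i => Real.sqrt (c i)) * Bᵀ)
    have heq2 : (Matrix.diagonal (fun i => Real.sqrt (c i)) * Bᵀ)ᴴ *
        (Matrix.diagonal (fun i => Real.sqrt (c i)) * Bᵀ) = B * Matrix.diagonal c * Bᵀ := by
      rw [ct_eq_t]
      calc (Matrix.diagonal (fun i => Real.sqrt (c i)) * Bᵀ)ᵀ *
          (Matrix.diagonal (fun i => Real.sqrt (c i)) * Bᵀ)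
          = B * (Matrix.diagonal (fun i => Real.sqrt (c i) * Real.sqrt (c i)) * Bᵀ) := by
            simp only [Matrix.transpose_mul, Matrix.diagonal_transpose,
              Matrix.transpose_transpose, Matrix.mul_assoc]
            congr 1
            rw [← Matrix.mul_assoc, Matrix.diagonal_mul_diagonal]
        _ = B * Matrix.diagonal c * Bᵀ := by
            rw [show (fun i => Real.sqrt (c i) * Real.sqrt (c i)) = c from funext sqrt_sq,
              Matrix.mul_assoc]
    rwa [heq2] at h0
  have hM : (Xᴴ * X).PosSemidef := Matrix.posSemidef_conjTranspose_mul_self X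
  have hsq : (B * Matrix.diagonal c * Bᵀ) ^ 2 = Xᴴ * X := by
    rw [hXtX, pow_two]
    calc (B * Matrix.diagonal c * Bᵀ) * (B * Matrix.diagonal c * Bᵀ)
        = B * Matrix.diagonal c * (Bᵀ * B) * Matrix.diagonal c * Bᵀ := by
          simp [Matrix.mul_assoc]
      _ = B * (Matrix.diagonal c * Matrix.diagonal c) * Bᵀ := by
          rw [hB, Matrix.mul_one]; simp [Matrix.mul_assoc]
      _ = B * Matrix.diagonal (fun i => c i * c i) * Bᵀ := by
          rw [Matrix.diagonal_mul_diagonal]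
  have heq : B * Matrix.diagonal c * Bᵀ = CFC.sqrt (Xᴴ * X) :=
    (CFC.sqrt_unique (a := Xᴴ * X) (by rw [← sq]; exact hsq) hN.nonneg).symm
  rw [nuclearNorm_eq_sum_sqrt]
  have hpi : Matrix.isHermitian_conjTranspose_mul_self X = hM.1 := Subsingleton.elim _ _
  rw [hpi, ← trace_sqrt hM, ← heq]
  rw [Matrix.trace_mul_cycle, hB, one_mul, Matrix.trace_diagonal]

/-- The dense-shrinkage step. With QR decompositions `D_X = Q_X R_X`,
`D_Y = Q_Y R_Y`, an SVD `R_X R_Yᵀ = U Σ Vᵀ` (Σ diagonal with non-increasing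
nonnegative entries), a threshold `γ ≥ 0`, `Σ̃ = max(Σ - γI, 0)`,
`B_X = Q_X U √Σ̃`, `B_Y = Q_Y V √Σ̃`, one has
`‖D_X D_Yᵀ - B_X B_Yᵀ‖ = ‖Σ - Σ̃‖ ≤ γ`, `‖B_X B_Yᵀ‖_* = tr(Σ̃)`, and
`‖D_X D_Yᵀ‖_* = tr(Σ)`. -/
theorem stmt18 (mx my d : ℕ)
    (QX : Matrix (Fin mx) (Fin d) ℝ) (QY : Matrix (Fin my) (Fin d) ℝ)
    (RX RY U V : Matrix (Fin d) (Fin d) ℝ)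
    (hQX : QXᵀ * QX = 1) (hQY : QYᵀ * QY = 1)
    (hU : Uᵀ * U = 1) (hU' : U * Uᵀ = 1) (hV : Vᵀ * V = 1) (hV' : V * Vᵀ = 1)
    (σ : Fin d → ℝ) (hmono : Antitone σ) (hnn : ∀ i, 0 ≤ σ i)
    (hSVD : RX * RYᵀ = U * Matrix.diagonal σ * Vᵀ)
    (γ : ℝ) (hγ : 0 ≤ γ)
    (σt : Fin d → ℝ) (hσt : σt = fun i => max (σ i - γ) 0)
    (DX : Matrix (Fin mx) (Fin d) ℝ) (DY : Matrix (Fin my) (Fin d) ℝ)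
    (hDX : DX = QX * RX) (hDY : DY = QY * RY)
    (BX : Matrix (Fin mx) (Fin d) ℝ) (BY : Matrix (Fin my) (Fin d) ℝ)
    (hBX : BX = QX * U * Matrix.diagonal fun i => Real.sqrt (σt i))
    (hBY : BY = QY * V * Matrix.diagonal fun i => Real.sqrt (σt i)) :
    specNorm (DX * DYᵀ - BX * BYᵀ) = specNorm (Matrix.diagonal σ - Matrix.diagonal σt) ∧
    specNorm (Matrix.diagonal σ - Matrix.diagonal σt) ≤ γ ∧
    nuclearNorm (BX * BYᵀ) = Matrix.trace (Matrix.diagonal σt) ∧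
    nuclearNorm (DX * DYᵀ) = Matrix.trace (Matrix.diagonal σ) := by
  have hσtnn : ∀ i, 0 ≤ σt i := by intro i; rw [hσt]; exact le_max_right _ _
  have hQU : (QX * U)ᵀ * (QX * U) = 1 := by
    rw [Matrix.transpose_mul]
    calc Uᵀ * QXᵀ * (QX * U) = Uᵀ * (QXᵀ * QX) * U := by simp only [Matrix.mul_assoc]
      _ = 1 := by rw [hQX, Matrix.mul_one, hU]
  have hQV : (QY * V)ᵀ * (QY * V) = 1 := by
    rw [Matrix.transpose_mul]
    calc Vᵀ * QYᵀ * (QY * V) = Vᵀ * (QYᵀ * QY) * V := by simp only [Matrix.mul_assoc]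
      _ = 1 := by rw [hQY, Matrix.mul_one, hV]
  have hD : DX * DYᵀ = (QX * U) * Matrix.diagonal σ * (QY * V)ᵀ := by
    calc DX * DYᵀ = QX * (RX * RYᵀ) * QYᵀ := by
          rw [hDX, hDY, Matrix.transpose_mul]; simp only [Matrix.mul_assoc]
      _ = QX * (U * Matrix.diagonal σ * Vᵀ) * QYᵀ := by rw [hSVD]
      _ = (QX * U) * Matrix.diagonal σ * (QY * V)ᵀ := by
          rw [Matrix.transpose_mul]; simp only [Matrix.mul_assoc]
  have dd2 : Matrix.diagonal (fun i => Real.sqrt (σt i)) *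
      Matrix.diagonal (fun i => Real.sqrt (σt i)) = Matrix.diagonal σt := by
    rw [Matrix.diagonal_mul_diagonal]
    exact congrArg _ (funext fun i => Real.mul_self_sqrt (hσtnn i))
  have hBp : BX * BYᵀ = (QX * U) * Matrix.diagonal σt * (QY * V)ᵀ := by
    rw [hBX, hBY]
    simp only [Matrix.transpose_mul, Matrix.diagonal_transpose, Matrix.mul_assoc]
    congr 2
    rw [← Matrix.mul_assoc, dd2]
  have hdiff : DX * DYᵀ - BX * BYᵀ =
      (QX * U) * (Matrix.diagonal σ - Matrix.diagonal σt) * (QY * V)ᵀ := by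
    rw [hD, hBp, Matrix.mul_sub, Matrix.sub_mul]
  refine ⟨?_, ?_, ?_, ?_⟩
  · rw [hdiff, specNorm_eq_l2norm, specNorm_eq_l2norm]
    exact norm_conj_eq _ _ hQU hQV _
  · rw [specNorm_eq_l2norm, Matrix.diagonal_sub]
    apply norm_diagonal_le _ _ hγ
    intro i
    simp only [hσt]
    rw [abs_le]
    rcases le_total (σ i - γ) 0 with h | h
    · rw [max_eq_right h]; constructor <;> simp <;> linarith [hnn i]
    · rw [max_eq_left h]; constructor <;> simp <;> linarith [hnn i]
  · rw [hBp, nuclearNorm_conj _ _ hQU hQV σt hσtnn, Matrix.trace_diagonal]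
  · rw [hD, nuclearNorm_conj _ _ hQU hQV σ hnn, Matrix.trace_diagonal]
end
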